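/- Let N ≥ 2, q > N/(N−1), p > 1, M > 0, and let u be a positive, radial, decreasing C² solution on (0,∞) of −u'' − ((N−1)/r)u' = u^p + M|u'|^q with u' ≤ 0 and r·|u'(r)|^(q−1) ≤ ((N−1)(q−1)−1)/((q−1)M) for all r > 0. Then the energy H(r) = u^(p+1)/(p+1) + (u')²/2 satisfies H'(r) ≤ −(u')²/((q−1)r) for all r > 0; in particular H is nonincreasing and |u'(r)| ≤ √(2/(p+1))·u(0)^((p+1)/2). -/

import Mathlib

/-- Proposition 5.1: monotonicity of the energy
H(r) = u^(p+1)/(p+1) + (u')²/2 and the gradient bound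
|u'(r)| ≤ √(2/(p+1))·u(0)^((p+1)/2). -/
theorem stmt16 (N p q M : ℝ) (hN : 2 ≤ N) (hq : N / (N - 1) < q) (hp : 1 < p)
    (hM : 0 < M)
    (u u' u'' : ℝ → ℝ)
    (hu : ∀ r : ℝ, 0 ≤ r → HasDerivAt u (u' r) r)
    (hu'' : ∀ r : ℝ, 0 < r → HasDerivAt u' (u'' r) r)
    (hode : ∀ r : ℝ, 0 < r →
      -(u'' r) - (N - 1) / r * u' r = u r ^ p + M * |u' r| ^ q)
    (hpos : ∀ r : ℝ, 0 ≤ r → 0 < u r)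
    (hneg : ∀ r : ℝ, 0 ≤ r → u' r ≤ 0)
    (hu'0 : u' 0 = 0)
    (hu'cont : Filter.Tendsto u' (nhdsWithin 0 (Set.Ioi 0)) (nhds 0))
    (hbound : ∀ r : ℝ, 0 < r →
      r * |u' r| ^ (q - 1) ≤ ((N - 1) * (q - 1) - 1) / ((q - 1) * M)) :
    (∀ r : ℝ, 0 < r →
      HasDerivAt (fun s : ℝ => u s ^ (p + 1) / (p + 1) + u' s ^ 2 / 2)
        (M * |u' r| ^ (q + 1) - (N - 1) / r * u' r ^ 2) r ∧
      M * |u' r| ^ (q + 1) - (N - 1) / r * u' r ^ 2 ≤ -(u' r ^ 2) / ((q - 1) * r)) ∧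
    AntitoneOn (fun s : ℝ => u s ^ (p + 1) / (p + 1) + u' s ^ 2 / 2) (Set.Ioi 0) ∧
    (∀ r : ℝ, 0 < r → |u' r| ≤ Real.sqrt (2 / (p + 1)) * u 0 ^ ((p + 1) / 2)) := by
  have hN1pos : (0:ℝ) < N - 1 := by linarith
  have hq1 : 1 < q := by
    have : (1:ℝ) < N / (N - 1) := by rw [lt_div_iff₀ hN1pos]; linarith
    linarith
  have hq0 : (0:ℝ) < q - 1 := by linarith
  have hp1 : (0:ℝ) < p + 1 := by linarith
  have habs : ∀ a s t : ℝ, 0 < s → 0 < t → |a| ^ (s + t) = |a| ^ s * |a| ^ t := by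
    intro a s t hs ht
    rcases eq_or_ne a 0 with rfl | ha
    · simp [Real.zero_rpow, hs.ne', ht.ne', (by positivity : (0:ℝ) < s + t).ne']
    · exact Real.rpow_add (abs_pos.mpr ha) s t
  -- the derivative identity
  have key : ∀ r : ℝ, 0 < r →
      HasDerivAt (fun s : ℝ => u s ^ (p + 1) / (p + 1) + u' s ^ 2 / 2)
        (M * |u' r| ^ (q + 1) - (N - 1) / r * u' r ^ 2) r := by
    intro r hr
    have h1 : HasDerivAt u (u' r) r := hu r hr.le
    have h2 : HasDerivAt u' (u'' r) r := hu'' r hr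
    have hur : u r ≠ 0 := (hpos r hr.le).ne'
    have hA : HasDerivAt (fun s : ℝ => u s ^ (p + 1) / (p + 1))
        (u' r * (p + 1) * u r ^ (p + 1 - 1) / (p + 1)) r :=
      (h1.rpow_const (Or.inl hur)).div_const _
    have hB : HasDerivAt (fun s : ℝ => u' s ^ 2 / 2) (u' r * u'' r) r := by
      have := (h2.pow 2).div_const 2
      exact this.congr_deriv (by ring)
    have hsum := hA.add hB
    refine hsum.congr_deriv ?_
    have hode' := hode r hr
    have hu''eq : u'' r = -((N - 1) / r * u' r) - u r ^ p - M * |u' r| ^ q := by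
      linarith
    have h3 : u' r * (p + 1) * u r ^ (p + 1 - 1) / (p + 1) = u r ^ p * u' r := by
      rw [show p + 1 - 1 = p by ring]
      field_simp
    rw [h3, hu''eq]
    have h4 : |u' r| ^ (q + 1) = |u' r| ^ q * |u' r| := by
      rw [habs (u' r) q 1 (by linarith) one_pos, Real.rpow_one]
    rw [h4, abs_of_nonpos (hneg r hr.le)]
    ring
  -- the pointwise inequality
  have ineq : ∀ r : ℝ, 0 < r →
      M * |u' r| ^ (q + 1) - (N - 1) / r * u' r ^ 2 ≤ -(u' r ^ 2) / ((q - 1) * r) := by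
    intro r hr
    have hb := hbound r hr
    have hsq : |u' r| ^ (q + 1) = |u' r| ^ (q - 1) * u' r ^ 2 := by
      rw [show q + 1 = (q - 1) + 2 by ring, habs (u' r) (q - 1) 2 hq0 (by norm_num)]
      congr 1
      rw [show ((2:ℝ)) = ((2:ℕ):ℝ) by norm_num, Real.rpow_natCast, sq_abs]
    have h5 : M * |u' r| ^ (q - 1) ≤ ((N - 1) * (q - 1) - 1) / ((q - 1) * r) := by
      have hmr : (0:ℝ) < M / r := by positivity
      have := mul_le_mul_of_nonneg_left hb hmr.le
      calc M * |u' r| ^ (q - 1) = M / r * (r * |u' r| ^ (q - 1)) := by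
            field_simp
        _ ≤ M / r * (((N - 1) * (q - 1) - 1) / ((q - 1) * M)) := this
        _ = ((N - 1) * (q - 1) - 1) / ((q - 1) * r) := by
            field_simp
    have h6 : M * |u' r| ^ (q - 1) * u' r ^ 2 ≤
        ((N - 1) * (q - 1) - 1) / ((q - 1) * r) * u' r ^ 2 :=
      mul_le_mul_of_nonneg_right h5 (sq_nonneg _)
    have heq : ((N - 1) * (q - 1) - 1) / ((q - 1) * r) * u' r ^ 2
        - (N - 1) / r * u' r ^ 2 = -(u' r ^ 2) / ((q - 1) * r) := by
      field_simp
      ring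
    rw [hsq, ← mul_assoc]
    linarith
  -- antitonicity
  have hanti : AntitoneOn (fun s : ℝ => u s ^ (p + 1) / (p + 1) + u' s ^ 2 / 2)
      (Set.Ioi 0) := by
    apply antitoneOn_of_deriv_nonpos (convex_Ioi 0)
    · exact fun x hx => ((key x hx).continuousAt).continuousWithinAt
    · intro x hx
      rw [isOpen_Ioi.interior_eq] at hx
      exact (key x hx).differentiableAt.differentiableWithinAt
    · intro x hx
      rw [isOpen_Ioi.interior_eq] at hx
      rw [(key x hx).deriv]
      have h1 := ineq x hx
      have h2 : -(u' x ^ 2) / ((q - 1) * x) ≤ 0 := by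
        apply div_nonpos_of_nonpos_of_nonneg
        · simpa using sq_nonneg (u' x)
        · exact mul_nonneg hq0.le (le_of_lt hx)
      linarith
  -- energy bound
  have hu0 : 0 < u 0 := hpos 0 le_rfl
  have hlim : ∀ r : ℝ, 0 < r → u' r ^ 2 / 2 ≤ u 0 ^ (p + 1) / (p + 1) := by
    intro r hr
    have htendu : Filter.Tendsto u (nhdsWithin 0 (Set.Ioi 0)) (nhds (u 0)) :=
      ((hu 0 le_rfl).continuousAt).continuousWithinAt
    have htH : Filter.Tendsto (fun s : ℝ => u s ^ (p + 1) / (p + 1) + u' s ^ 2 / 2)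
        (nhdsWithin 0 (Set.Ioi 0))
        (nhds (u 0 ^ (p + 1) / (p + 1) + (0:ℝ) ^ 2 / 2)) := by
      exact ((htendu.rpow_const (Or.inr hp1.le)).div_const _).add
        ((hu'cont.pow 2).div_const 2)
    have hev : ∀ᶠ s in nhdsWithin 0 (Set.Ioi 0),
        u' r ^ 2 / 2 ≤ u s ^ (p + 1) / (p + 1) + u' s ^ 2 / 2 := by
      filter_upwards [Ioc_mem_nhdsGT_of_mem (Set.mem_Ico.mpr ⟨le_rfl, hr⟩)] with s hs
      have hHle := hanti hs.1 hr hs.2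
      have hpos' : 0 ≤ u r ^ (p + 1) / (p + 1) :=
        div_nonneg (Real.rpow_nonneg (hpos r hr.le).le _) hp1.le
      simp only at hHle
      linarith
    have := ge_of_tendsto htH hev
    simpa using this
  refine ⟨fun r hr => ⟨key r hr, ineq r hr⟩, hanti, ?_⟩
  intro r hr
  have h1 := hlim r hr
  have h2 : u' r ^ 2 ≤ 2 / (p + 1) * u 0 ^ (p + 1) := by
    rw [div_le_div_iff₀ two_pos hp1] at h1
    rw [div_mul_eq_mul_div, le_div_iff₀ hp1]
    linarith
  have h3 : |u' r| = Real.sqrt (u' r ^ 2) := (Real.sqrt_sq_eq_abs _).symm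
  rw [h3]
  have h4 : Real.sqrt (2 / (p + 1)) * u 0 ^ ((p + 1) / 2)
      = Real.sqrt (2 / (p + 1) * u 0 ^ (p + 1)) := by
    rw [Real.sqrt_mul (by positivity)]
    congr 1
    rw [Real.sqrt_eq_rpow, show (p + 1) / 2 = (p + 1) * (1 / 2) by ring,
      Real.rpow_mul hu0.le]
  rw [h4]
  exact Real.sqrt_le_sqrt h2
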